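/- arXiv:0705.2000 — 3 statements merged into one kernel-verified Lean document; each statement's English description precedes it below -/
import Mathlib

section
/- With H(t) = ((sinh²t + t²)cosh t − 2t sinh t)/sinh³t, the improper integral ∫₀^∞ (H(r²/2) − 1) r dr converges and equals −1/2. -/
open Real Filter MeasureTheory

/-- The pair correlation scaling function. -/
noncomputable def Hfun (t : ℝ) : ℝ :=
  ((Real.sinh t ^ 2 + t ^ 2) * Real.cosh t - 2 * t * Real.sinh t) / (Real.sinh t) ^ 3

noncomputable def Gfun (t : ℝ) : ℝ :=
  t * Real.cosh t / Real.sinh t - t ^ 2 / (2 * Real.sinh t ^ 2) - t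

noncomputable def Ffun (r : ℝ) : ℝ := if r = 0 then 1/2 else Gfun (r ^ 2 / 2)

lemma hasDerivAt_Gfun {t : ℝ} (ht : 0 < t) : HasDerivAt Gfun (Hfun t - 1) t := by
  have hsp := Real.sinh_pos_iff.2 ht
  have hs : Real.sinh t ≠ 0 := hsp.ne'
  have h1 : HasDerivAt (fun t : ℝ => t * Real.cosh t / Real.sinh t)
      (((1 * Real.cosh t + t * Real.sinh t) * Real.sinh t - t * Real.cosh t * Real.cosh t)
        / Real.sinh t ^ 2) t :=
    ((hasDerivAt_id t).mul (Real.hasDerivAt_cosh t)).div (Real.hasDerivAt_sinh t) hs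
  have h2 : HasDerivAt (fun t : ℝ => t ^ 2 / (2 * Real.sinh t ^ 2))
      ((2 * t ^ 1 * (2 * Real.sinh t ^ 2) - t ^ 2 * (2 * (2 * Real.sinh t ^ 1 * Real.cosh t)))
        / (2 * Real.sinh t ^ 2) ^ 2) t := by
    have hd : HasDerivAt (fun t : ℝ => 2 * Real.sinh t ^ 2)
        (2 * (2 * Real.sinh t ^ 1 * Real.cosh t)) t :=
      (((Real.hasDerivAt_sinh t).pow 2)).const_mul 2
    exact (hasDerivAt_pow 2 t).div hd (by positivity)
  have h := (h1.sub h2).sub (hasDerivAt_id t)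
  refine h.congr_deriv ?_
  symm
  have hc : Real.cosh t ^ 2 = 1 + Real.sinh t ^ 2 := Real.cosh_sq' t
  unfold Hfun
  field_simp
  linear_combination (Real.sinh t * t) * hc

lemma hasDerivAt_Ffun {r : ℝ} (hr : 0 < r) :
    HasDerivAt Ffun ((Hfun (r ^ 2 / 2) - 1) * r) r := by
  have ht : 0 < r ^ 2 / 2 := by positivity
  have hpar : HasDerivAt (fun r : ℝ => r ^ 2 / 2) r r := by
    have := (hasDerivAt_pow 2 r).div_const 2
    simpa using this
  have h := (hasDerivAt_Gfun ht).comp r hpar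
  have heq : Ffun =ᶠ[nhds r] (fun r => Gfun (r ^ 2 / 2)) := by
    filter_upwards [eventually_ne_nhds hr.ne'] with x hx
    simp [Ffun, hx]
  have h' : HasDerivAt (fun r => Gfun (r ^ 2 / 2)) ((Hfun (r ^ 2 / 2) - 1) * r) r := by
    simpa [mul_comm, Function.comp_def] using h
  exact h'.congr_of_eventuallyEq heq

lemma tendsto_Gfun_zero : Tendsto Gfun (nhdsWithin 0 (Set.Ioi 0)) (nhds (1/2)) := by
  have hslope : Tendsto (fun t : ℝ => Real.sinh t / t) (nhdsWithin 0 {(0:ℝ)}ᶜ) (nhds 1) := by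
    have h := hasDerivAt_iff_tendsto_slope.1 (Real.hasDerivAt_sinh 0)
    simp only [Real.cosh_zero] at h
    refine h.congr' ?_
    filter_upwards [self_mem_nhdsWithin] with x hx
    simp [slope_def_field, Real.sinh_zero]
  have hinv : Tendsto (fun t : ℝ => t / Real.sinh t) (nhdsWithin 0 {(0:ℝ)}ᶜ) (nhds 1) := by
    have := (hslope.inv₀ (one_ne_zero)).congr (fun x => by rw [← one_div, one_div_div])
    simpa using this
  have hmain : Tendsto Gfun (nhdsWithin 0 {(0:ℝ)}ᶜ) (nhds (1/2)) := by
    have hcosh : Tendsto (fun t : ℝ => Real.cosh t) (nhdsWithin 0 {(0:ℝ)}ᶜ) (nhds 1) := by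
      have h0 : Tendsto Real.cosh (nhdsWithin 0 {(0:ℝ)}ᶜ) (nhds (Real.cosh 0)) :=
        (Real.continuous_cosh.tendsto 0).mono_left nhdsWithin_le_nhds
      simpa using h0
    have h1 : Tendsto (fun t : ℝ => t * Real.cosh t / Real.sinh t)
        (nhdsWithin 0 {(0:ℝ)}ᶜ) (nhds 1) := by
      have := (hinv.mul hcosh)
      simp only [one_mul] at this
      refine this.congr (fun x => by ring)
    have h2 : Tendsto (fun t : ℝ => t ^ 2 / (2 * Real.sinh t ^ 2))
        (nhdsWithin 0 {(0:ℝ)}ᶜ) (nhds (1/2)) := by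
      have := ((hinv.mul hinv).div_const 2)
      simp only [one_mul] at this
      refine this.congr (fun x => by ring)
    have h3 : Tendsto (fun t : ℝ => t) (nhdsWithin 0 {(0:ℝ)}ᶜ) (nhds 0) :=
      tendsto_id.mono_left nhdsWithin_le_nhds
    have := (h1.sub h2).sub h3
    norm_num at this
    exact this.congr (fun x => rfl)
  exact hmain.mono_left (nhdsWithin_mono 0 (fun x hx => ne_of_gt hx))

lemma continuousWithinAt_Ffun : ContinuousWithinAt Ffun (Set.Ici 0) 0 := by
  have hF0 : Ffun 0 = 1/2 := by simp [Ffun]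
  rw [ContinuousWithinAt, hF0]
  rw [show (Set.Ici (0:ℝ)) = insert 0 (Set.Ioi 0) by
    rw [Set.Ioi_insert]]
  rw [nhdsWithin_insert]
  rw [tendsto_sup]
  constructor
  · simpa [hF0] using (tendsto_pure_nhds Ffun 0 : Tendsto Ffun (pure 0) (nhds (Ffun 0)))
  · have hG := tendsto_Gfun_zero
    have hsq : Tendsto (fun r : ℝ => r ^ 2 / 2) (nhdsWithin 0 (Set.Ioi 0))
        (nhdsWithin 0 (Set.Ioi 0)) := by
      apply tendsto_nhdsWithin_of_tendsto_nhds_of_eventually_within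
      · have : Tendsto (fun r : ℝ => r ^ 2 / 2) (nhds 0) (nhds 0) := by
          have := ((continuous_pow 2).div_const 2).tendsto (0:ℝ)
          simpa using this
        exact this.mono_left nhdsWithin_le_nhds
      · filter_upwards [self_mem_nhdsWithin] with x hx
        exact div_pos (pow_pos hx 2) (two_pos : (0:ℝ) < 2)
    have := hG.comp hsq
    refine this.congr' ?_
    filter_upwards [self_mem_nhdsWithin] with x hx
    simp [Ffun, (ne_of_gt hx : x ≠ 0), Function.comp]

lemma exp_quarter_le_sinh {t : ℝ} (ht : 1/2 ≤ t) : Real.exp t / 4 ≤ Real.sinh t := by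
  have hE : 0 < Real.exp t := Real.exp_pos t
  have h2 : 2 ≤ Real.exp t * Real.exp t := by
    rw [← Real.exp_add]
    calc (2:ℝ) ≤ Real.exp 1 := by nlinarith [Real.add_one_le_exp 1]
    _ ≤ Real.exp (t + t) := Real.exp_le_exp.2 (by linarith)
  have hi : Real.exp t * (Real.exp t)⁻¹ = 1 := mul_inv_cancel₀ hE.ne'
  have hipos : 0 < (Real.exp t)⁻¹ := by positivity
  rw [Real.sinh_eq, Real.exp_neg]
  nlinarith [hi, h2, hE, hipos]

lemma tendsto_Gfun_atTop : Tendsto Gfun atTop (nhds 0) := by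
  have hb : Tendsto (fun t : ℝ => 12 * (t ^ 2 * Real.exp (-(2 * t)))) atTop (nhds 0) := by
    have h := tendsto_pow_mul_exp_neg_atTop_nhds_zero 2
    have h2 : Tendsto (fun t : ℝ => 2 * t) atTop atTop :=
      Tendsto.const_mul_atTop two_pos tendsto_id
    have h3 : Tendsto (fun t : ℝ => 3 * ((2*t) ^ 2 * Real.exp (-(2*t)))) atTop (nhds 0) := by
      simpa [Function.comp] using (h.comp h2).const_mul (3 : ℝ)
    exact h3.congr (fun t => by ring)
  apply squeeze_zero_norm' _ hb
  filter_upwards [eventually_ge_atTop (1:ℝ)] with t ht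
  have ht2 : (1:ℝ)/2 ≤ t := by linarith
  have hE : 0 < Real.exp t := Real.exp_pos t
  have hs := exp_quarter_le_sinh ht2
  have hs0 : 0 < Real.sinh t := lt_of_lt_of_le (by positivity) hs
  have key : Real.exp (-(2 * t)) * Real.exp t = Real.exp (-t) := by
    rw [← Real.exp_add]; congr 1; ring
  have key2 : Real.exp (-(2 * t)) * (Real.exp t * Real.exp t) = 1 := by
    rw [← Real.exp_add, ← Real.exp_add, show -(2*t) + (t + t) = 0 by ring, Real.exp_zero]
  have hXpos : 0 < Real.exp (-(2 * t)) := Real.exp_pos _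
  have hYpos : 0 < Real.exp (-t) := Real.exp_pos _
  have hrep : Gfun t = t * Real.exp (-t) / Real.sinh t - t ^ 2 / (2 * Real.sinh t ^ 2) := by
    have hcs : Real.cosh t - Real.sinh t = Real.exp (-t) := Real.cosh_sub_sinh t
    unfold Gfun
    field_simp
    linear_combination (2 * Real.sinh t) * hcs
  have hA : t * Real.exp (-t) / Real.sinh t ≤ 4 * (t ^ 2 * Real.exp (-(2 * t))) := by
    rw [div_le_iff₀ hs0]
    have e1 : t ^ 2 * (Real.exp (-(2*t)) * Real.exp t) = t ^ 2 * Real.exp (-t) := by rw [key]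
    have e3 : 0 ≤ t ^ 2 - t := by nlinarith
    nlinarith [mul_le_mul_of_nonneg_left hs
      (by positivity : (0:ℝ) ≤ 4 * (t ^ 2 * Real.exp (-(2 * t)))), e1, hYpos,
      mul_nonneg e3 hYpos.le]
  have hB : t ^ 2 / (2 * Real.sinh t ^ 2) ≤ 8 * (t ^ 2 * Real.exp (-(2 * t))) := by
    rw [div_le_iff₀ (by positivity)]
    have e2 : t ^ 2 * (Real.exp (-(2*t)) * (Real.exp t * Real.exp t)) = t ^ 2 := by
      rw [key2]; ring
    nlinarith [mul_le_mul_of_nonneg_left (mul_le_mul hs hs (by positivity) hs0.le)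
      (by positivity : (0:ℝ) ≤ 16 * (t ^ 2 * Real.exp (-(2 * t)))), e2, sq_nonneg t]
  have hApos : 0 ≤ t * Real.exp (-t) / Real.sinh t := by positivity
  have hBpos : 0 ≤ t ^ 2 / (2 * Real.sinh t ^ 2) := by positivity
  rw [hrep, Real.norm_eq_abs, abs_le]
  constructor <;> linarith

lemma tendsto_Ffun_atTop : Tendsto Ffun atTop (nhds 0) := by
  have hsq : Tendsto (fun r : ℝ => r ^ 2 / 2) atTop atTop := by
    apply Tendsto.atTop_div_const two_pos
    exact tendsto_pow_atTop (by norm_num)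
  have h := tendsto_Gfun_atTop.comp hsq
  refine h.congr' ?_
  filter_upwards [eventually_ne_atTop (0:ℝ)] with x hx
  simp [Ffun, hx, Function.comp]

lemma key_ineq {u : ℝ} (h0 : 0 < u) (h1 : u ≤ 1) :
    (Real.exp u - 1) ^ 2 + u ^ 2 / 2 * (Real.exp u * (Real.exp u + 1)) ≤
      2 * u * (Real.exp u * (Real.exp u - 1)) := by
  have hlow : 1 + u + u ^ 2 / 2 + u ^ 3 / 6 ≤ Real.exp u := by
    have h := Real.sum_le_exp_of_nonneg h0.le 4
    simp [Finset.sum_range_succ, Nat.factorial] at h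
    linarith
  have hup : Real.exp u ≤ 1 + u + u ^ 2 / 2 + u ^ 3 / 6 + u ^ 4 * (5 / 96) := by
    have h := Real.exp_bound (x := u) (by rw [abs_of_pos h0]; exact h1) (n := 4) (by norm_num)
    rw [abs_of_pos h0] at h
    simp [Finset.sum_range_succ, Nat.factorial] at h
    rw [abs_le] at h
    have := h.2
    nlinarith [this]
  nlinarith [hlow, hup, h0, h1, sq_nonneg u, pow_pos h0 3, pow_pos h0 4,
    mul_nonneg (sub_nonneg.2 hlow) h0.le,
    mul_nonneg (mul_nonneg (sub_nonneg.2 hlow) h0.le) h0.le,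
    mul_nonneg (sub_nonneg.2 hup) h0.le, sq_nonneg (Real.exp u - 1 - u)]

lemma Hfun_nonneg {t : ℝ} (h0 : 0 < t) : 0 ≤ Hfun t := by
  have hsp := Real.sinh_pos_iff.2 h0
  apply div_nonneg _ (by positivity)
  nlinarith [Real.one_le_cosh t, sq_nonneg (Real.sinh t - t), sq_nonneg (Real.sinh t),
    sq_nonneg t, mul_pos h0 hsp]

lemma Hfun_le_one {t : ℝ} (h0 : 0 < t) (h1 : t ≤ 1 / 2) : Hfun t ≤ 1 := by
  have hsp := Real.sinh_pos_iff.2 h0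
  rw [Hfun, div_le_one (by positivity)]
  set E := Real.exp t with hEdef
  have hE : 0 < E := Real.exp_pos t
  have hy : E * E = Real.exp (2 * t) := by rw [← Real.exp_add]; congr 1; ring
  have key := key_ineq (u := 2 * t) (by linarith) (by linarith)
  rw [← hy] at key
  have hid : Real.sinh t ^ 3 - ((Real.sinh t ^ 2 + t ^ 2) * Real.cosh t - 2 * t * Real.sinh t)
      = (2 * (2 * t) * ((E * E) * ((E * E) - 1)) -
          (((E * E) - 1) ^ 2 + (2 * t) ^ 2 / 2 * ((E * E) * ((E * E) + 1)))) / (4 * E ^ 3) := by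
    rw [Real.sinh_eq, Real.cosh_eq, Real.exp_neg, ← hEdef]
    field_simp
    ring
  have hnum : 0 ≤ 2 * (2 * t) * ((E * E) * ((E * E) - 1)) -
      (((E * E) - 1) ^ 2 + (2 * t) ^ 2 / 2 * ((E * E) * ((E * E) + 1))) := by linarith
  nlinarith [div_nonneg hnum (by positivity : (0:ℝ) ≤ 4 * E ^ 3), hid]

lemma abs_Hfun_sub_one_le {t : ℝ} (ht : 1 / 2 ≤ t) :
    |Hfun t - 1| ≤ 256 * t ^ 2 * Real.exp (-(2 * t)) := by
  have h0 : 0 < t := by linarith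
  have hsp := Real.sinh_pos_iff.2 h0
  have hE : 0 < Real.exp t := Real.exp_pos t
  obtain ⟨E, hEdef⟩ : ∃ E, Real.exp t = E := ⟨_, rfl⟩
  obtain ⟨Y, hYdef⟩ : ∃ Y, Real.exp (-t) = Y := ⟨_, rfl⟩
  obtain ⟨X, hXdef⟩ : ∃ X, Real.exp (-(2 * t)) = X := ⟨_, rfl⟩
  rw [hEdef] at hE
  rw [hXdef]
  have hY : 0 < Y := hYdef ▸ Real.exp_pos _
  have hX : 0 < X := hXdef ▸ Real.exp_pos _
  have hYE : Y * E = 1 := by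
    rw [← hYdef, ← hEdef, ← Real.exp_add, show -t + t = 0 by ring, Real.exp_zero]
  have hXE : X * (E * E) = 1 := by
    rw [← hXdef, ← hEdef, ← Real.exp_add, ← Real.exp_add,
      show -(2 * t) + (t + t) = 0 by ring, Real.exp_zero]
  have hcs : Real.cosh t - Real.sinh t = Y := by rw [← hYdef]; exact Real.cosh_sub_sinh t
  have hc_pos := Real.cosh_pos t
  -- bounds relating sinh, cosh, E
  have hs_le : Real.sinh t ≤ E / 2 := by
    rw [Real.sinh_eq, Real.exp_neg, hEdef]
    have : 0 < E⁻¹ := by positivity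
    linarith
  have hc_le : Real.cosh t ≤ E := by
    rw [Real.cosh_eq, Real.exp_neg, hEdef]
    have h2 : 2 ≤ E * E := by
      rw [← hEdef, ← Real.exp_add]
      calc (2:ℝ) ≤ Real.exp 1 := by nlinarith [Real.add_one_le_exp 1]
      _ ≤ Real.exp (t + t) := Real.exp_le_exp.2 (by linarith)
    have hi : E * E⁻¹ = 1 := mul_inv_cancel₀ hE.ne'
    have : 0 < E⁻¹ := by positivity
    nlinarith
  have hs_ge : E / 4 ≤ Real.sinh t := by
    rw [← hEdef]; exact exp_quarter_le_sinh ht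
  -- rewrite Hfun t - 1
  have h1 : Hfun t - 1 = (Real.sinh t ^ 2 * Y + t ^ 2 * Real.cosh t - 2 * t * Real.sinh t)
      / Real.sinh t ^ 3 := by
    rw [Hfun]
    field_simp
    linear_combination (Real.sinh t ^ 2) * hcs
  rw [h1, abs_div, abs_of_pos (by positivity : (0:ℝ) < Real.sinh t ^ 3)]
  rw [div_le_iff₀ (by positivity)]
  have habs : |Real.sinh t ^ 2 * Y + t ^ 2 * Real.cosh t - 2 * t * Real.sinh t|
      ≤ Real.sinh t ^ 2 * Y + t ^ 2 * Real.cosh t + 2 * t * Real.sinh t := by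
    rw [abs_le]
    constructor <;> nlinarith [mul_nonneg (sq_nonneg (Real.sinh t)) hY.le,
      mul_nonneg (sq_nonneg t) hc_pos.le, mul_nonneg h0.le hsp.le]
  have hcube : (E / 4) ^ 3 ≤ Real.sinh t ^ 3 :=
    pow_le_pow_left₀ (by positivity) hs_ge 3
  have hrhs : 4 * t ^ 2 * E ≤ 256 * t ^ 2 * X * Real.sinh t ^ 3 := by
    have step : 256 * t ^ 2 * X * (E / 4) ^ 3 ≤ 256 * t ^ 2 * X * Real.sinh t ^ 3 :=
      mul_le_mul_of_nonneg_left hcube (by positivity)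
    have eq1 : 256 * t ^ 2 * X * (E / 4) ^ 3 = 4 * t ^ 2 * E := by
      linear_combination (4 * t ^ 2 * E) * hXE
    linarith
  have hlhs : Real.sinh t ^ 2 * Y + t ^ 2 * Real.cosh t + 2 * t * Real.sinh t
      ≤ 4 * t ^ 2 * E := by
    have hA : Real.sinh t ^ 2 * Y ≤ E / 4 := by
      have h5 : Real.sinh t ^ 2 ≤ E ^ 2 / 4 := by nlinarith
      have h6 : Real.sinh t ^ 2 * Y ≤ E ^ 2 / 4 * Y := mul_le_mul_of_nonneg_right h5 hY.le
      have h7 : E ^ 2 / 4 * Y = E / 4 := by linear_combination (E / 4) * hYE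
      linarith
    have hB : t ^ 2 * Real.cosh t ≤ t ^ 2 * E := mul_le_mul_of_nonneg_left hc_le (by positivity)
    have hC : 2 * t * Real.sinh t ≤ t * E := by nlinarith [hs_le, h0]
    have hfinal : E / 4 + t ^ 2 * E + t * E ≤ 4 * t ^ 2 * E := by
      nlinarith [sq_nonneg (t - 1/2), hE, ht]
    linarith
  calc |Real.sinh t ^ 2 * Y + t ^ 2 * Real.cosh t - 2 * t * Real.sinh t|
      ≤ Real.sinh t ^ 2 * Y + t ^ 2 * Real.cosh t + 2 * t * Real.sinh t := habs
    _ ≤ 4 * t ^ 2 * E := hlhs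
    _ ≤ 256 * t ^ 2 * X * Real.sinh t ^ 3 := hrhs

lemma measurable_integrand : Measurable fun r : ℝ => (Hfun (r ^ 2 / 2) - 1) * r := by
  have c1 : Continuous fun t : ℝ =>
      (Real.sinh t ^ 2 + t ^ 2) * Real.cosh t - 2 * t * Real.sinh t := by fun_prop
  have c2 : Continuous fun t : ℝ => Real.sinh t ^ 3 := by fun_prop
  have hH : Measurable Hfun := c1.measurable.div c2.measurable
  have c3 : Continuous fun r : ℝ => r ^ 2 / 2 := by fun_prop
  exact ((hH.comp c3.measurable).sub measurable_const).mul measurable_id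

lemma integrableOn_integrand :
    IntegrableOn (fun r : ℝ => (Hfun (r ^ 2 / 2) - 1) * r) (Set.Ioi 0) := by
  rw [show Set.Ioi (0:ℝ) = Set.Ioc 0 1 ∪ Set.Ioi 1 from (Set.Ioc_union_Ioi_eq_Ioi zero_le_one).symm]
  apply IntegrableOn.union
  · apply Measure.integrableOn_of_bounded (M := 1) measure_Ioc_lt_top.ne
      measurable_integrand.aestronglyMeasurable
    filter_upwards [ae_restrict_mem measurableSet_Ioc] with r hr
    have h0 : 0 < r := hr.1
    have ht0 : 0 < r ^ 2 / 2 := by positivity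
    have ht1 : r ^ 2 / 2 ≤ 1 / 2 := by nlinarith [hr.2, h0]
    have hHn := Hfun_nonneg ht0
    have hHl := Hfun_le_one ht0 ht1
    have hH : |Hfun (r ^ 2 / 2) - 1| ≤ 1 := abs_le.2 ⟨by linarith, by linarith⟩
    have hrb : |r| ≤ 1 := abs_le.2 ⟨by linarith, hr.2⟩
    calc ‖(Hfun (r ^ 2 / 2) - 1) * r‖ = |Hfun (r ^ 2 / 2) - 1| * |r| := by
          rw [Real.norm_eq_abs, abs_mul]
      _ ≤ 1 * 1 := mul_le_mul hH hrb (abs_nonneg r) zero_le_one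
      _ = 1 := by norm_num
  · have hint : IntegrableOn (fun r : ℝ => 7680 * Real.exp 1 * Real.exp (-1 * r))
        (Set.Ioi 1) := (exp_neg_integrableOn_Ioi 1 one_pos).const_mul _
    apply Integrable.mono hint measurable_integrand.aestronglyMeasurable
    filter_upwards [ae_restrict_mem measurableSet_Ioi] with r hr
    have hr1 : (1:ℝ) < r := hr
    have h0 : (0:ℝ) < r := lt_trans one_pos hr1
    have ht : 1 / 2 ≤ r ^ 2 / 2 := by nlinarith [hr1]
    have habs := abs_Hfun_sub_one_le ht
    have e1 : Real.exp (-(2 * (r ^ 2 / 2))) = Real.exp (-(r ^ 2)) := by congr 1; ring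
    rw [e1] at habs
    have hr5 : r ^ 5 ≤ 120 * Real.exp r := by
      have h := Real.sum_le_exp_of_nonneg h0.le 6
      simp [Finset.sum_range_succ, Nat.factorial] at h
      nlinarith [h, pow_nonneg h0.le 2, pow_nonneg h0.le 3, pow_nonneg h0.le 4, h0.le]
    have hexp : Real.exp (r - r ^ 2) ≤ Real.exp (1 - r) :=
      Real.exp_le_exp.2 (by nlinarith [sq_nonneg (r - 1)])
    have key : 64 * r ^ 5 * Real.exp (-(r ^ 2)) ≤ 7680 * Real.exp 1 * Real.exp (-r) := by
      have s1 : 64 * r ^ 5 * Real.exp (-(r ^ 2)) ≤ 64 * (120 * Real.exp r) * Real.exp (-(r ^ 2)) :=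
        mul_le_mul_of_nonneg_right (mul_le_mul_of_nonneg_left hr5 (by norm_num))
          (Real.exp_pos _).le
      have s2 : (64:ℝ) * (120 * Real.exp r) * Real.exp (-(r ^ 2)) = 7680 * Real.exp (r - r ^ 2) := by
        rw [show r - r ^ 2 = r + -(r ^ 2) by ring, Real.exp_add]; ring
      have s3 : (7680:ℝ) * Real.exp (1 - r) = 7680 * Real.exp 1 * Real.exp (-r) := by
        rw [show (1:ℝ) - r = 1 + -r by ring, Real.exp_add]; ring
      calc 64 * r ^ 5 * Real.exp (-(r ^ 2)) ≤ 7680 * Real.exp (r - r ^ 2) := by rw [← s2]; exact s1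
        _ ≤ 7680 * Real.exp (1 - r) := by
            exact mul_le_mul_of_nonneg_left hexp (by norm_num)
        _ = 7680 * Real.exp 1 * Real.exp (-r) := s3
    calc ‖(Hfun (r ^ 2 / 2) - 1) * r‖ = |Hfun (r ^ 2 / 2) - 1| * r := by
          rw [Real.norm_eq_abs, abs_mul, abs_of_pos h0]
      _ ≤ 256 * (r ^ 2 / 2) ^ 2 * Real.exp (-(r ^ 2)) * r :=
          mul_le_mul_of_nonneg_right habs h0.le
      _ = 64 * r ^ 5 * Real.exp (-(r ^ 2)) := by ring
      _ ≤ 7680 * Real.exp 1 * Real.exp (-r) := key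
      _ ≤ ‖7680 * Real.exp 1 * Real.exp (-1 * r)‖ := by
          rw [Real.norm_eq_abs, neg_one_mul]
          exact le_abs_self _

/-- ∫₀^∞ (H(r²/2) − 1) r dr converges and equals −1/2. -/
theorem integral_Hfun_sub_one :
    IntegrableOn (fun r : ℝ => (Hfun (r ^ 2 / 2) - 1) * r) (Set.Ioi 0) ∧
    ∫ r in Set.Ioi (0 : ℝ), (Hfun (r ^ 2 / 2) - 1) * r = -1 / 2 := by
  refine ⟨integrableOn_integrand, ?_⟩
  have h := integral_Ioi_of_hasDerivAt_of_tendsto (a := 0) (f := Ffun) (m := 0)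
    (f' := fun r => (Hfun (r ^ 2 / 2) - 1) * r)
    continuousWithinAt_Ffun (fun x hx => hasDerivAt_Ffun hx)
    integrableOn_integrand tendsto_Ffun_atTop
  rw [h]
  norm_num [Ffun]
end

section
/- For 0 ≤ s < 2, as N → ∞, N^{1+s/2} · ∫₀^{√(log N)} H(r²/2) r^{1−s} dr = (1/(2−s)) N^{1+s/2} (log N)^{1−s/2} (1 + o(1)) + O(N^{1+s/2}), where H(t) = ((sinh²t + t²)cosh t − 2t sinh t)/sinh³t. -/
open Real Filter Asymptotics intervalIntegral
open MeasureTheory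

lemma exp_taylor3_pos {t : ℝ} (h0 : 0 ≤ t) (h1 : t ≤ 1) :
    |Real.exp t - (1 + t + t^2/2)| ≤ (2/9) * t^3 := by
  have h := Real.exp_bound (x := t) (by rwa [abs_of_nonneg h0]) (n := 3) (by norm_num)
  simp only [Finset.sum_range_succ, Finset.sum_range_zero, Nat.factorial] at h
  rw [abs_of_nonneg h0] at h
  norm_num at h ⊢
  linarith [h]

lemma exp_taylor3_neg {t : ℝ} (h0 : 0 ≤ t) (h1 : t ≤ 1) :
    |Real.exp (-t) - (1 - t + t^2/2)| ≤ (2/9) * t^3 := by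
  have h := Real.exp_bound (x := -t) (by rwa [abs_neg, abs_of_nonneg h0]) (n := 3) (by norm_num)
  simp only [Finset.sum_range_succ, Finset.sum_range_zero, Nat.factorial] at h
  rw [abs_neg, abs_of_nonneg h0] at h
  norm_num at h ⊢
  rw [show (1:ℝ) - t + t^2/2 = 1 + -t + t^2/2 by ring]
  linarith [h]

lemma sinh_sub_le {t : ℝ} (h0 : 0 ≤ t) (h1 : t ≤ 1) : Real.sinh t - t ≤ t^3 := by
  have hp := abs_le.1 (exp_taylor3_pos h0 h1)
  have hn := abs_le.1 (exp_taylor3_neg h0 h1)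
  rw [Real.sinh_eq]
  have h3 : 0 ≤ t^3 := by positivity
  nlinarith [hp.1, hp.2, hn.1, hn.2]

lemma cosh_sub_le {t : ℝ} (h0 : 0 ≤ t) (h1 : t ≤ 1) : Real.cosh t - 1 ≤ t^2 := by
  have hp := abs_le.1 (exp_taylor3_pos h0 h1)
  have hn := abs_le.1 (exp_taylor3_neg h0 h1)
  rw [Real.cosh_eq]
  have h3 : t^3 ≤ t^2 := by nlinarith
  nlinarith [hp.1, hp.2, hn.1, hn.2]

lemma HA {t : ℝ} (h0 : 0 ≤ t) (h1 : t ≤ 1) : |Hfun t - 1| ≤ 7 := by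
  rcases eq_or_lt_of_le h0 with h | h
  · simp [Hfun, ← h]
  · have hS : 0 < Real.sinh t := Real.sinh_pos_iff.2 h
    have hSt : t ≤ Real.sinh t := Real.self_le_sinh_iff.2 h0
    have hSle : Real.sinh t - t ≤ t^3 := sinh_sub_le h0 h1
    have hC1 : 1 ≤ Real.cosh t := Real.one_le_cosh t
    have hCle : Real.cosh t - 1 ≤ t^2 := cosh_sub_le h0 h1
    have hC2 : Real.cosh t ≤ 2 := by nlinarith
    have hS2 : Real.sinh t ≤ 2*t := by nlinarith
    have ht64 : t^6 ≤ t^4 := pow_le_pow_of_le_one h0 h1 (by norm_num)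
    have ht43 : t^4 ≤ t^3 := pow_le_pow_of_le_one h0 h1 (by norm_num)
    have hnum : (Real.sinh t ^ 2 + t ^ 2) * Real.cosh t - 2 * t * Real.sinh t
        = Real.cosh t * (Real.sinh t - t)^2 + 2 * t * Real.sinh t * (Real.cosh t - 1) := by ring
    have hterm1 : Real.cosh t * (Real.sinh t - t)^2 ≤ 2 * t^6 := by
      have : (Real.sinh t - t)^2 ≤ (t^3)^2 := by nlinarith
      nlinarith [sq_nonneg (Real.sinh t - t)]
    have hterm2 : 2 * t * Real.sinh t * (Real.cosh t - 1) ≤ 4 * t^4 := by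
      have h1' : Real.sinh t * (Real.cosh t - 1) ≤ (2*t) * t^2 :=
        mul_le_mul hS2 hCle (by linarith) (by linarith)
      have h2' := mul_le_mul_of_nonneg_left h1' (by linarith : (0:ℝ) ≤ 2*t)
      nlinarith [h2']
    have hnum_nonneg : 0 ≤ (Real.sinh t ^ 2 + t ^ 2) * Real.cosh t - 2 * t * Real.sinh t := by
      rw [hnum]
      have : 0 ≤ 2 * t * Real.sinh t * (Real.cosh t - 1) := by
        apply mul_nonneg (by positivity) (by linarith)
      nlinarith [sq_nonneg (Real.sinh t - t)]
    have hnum_le : (Real.sinh t ^ 2 + t ^ 2) * Real.cosh t - 2 * t * Real.sinh t ≤ 6 * t^4 := by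
      rw [hnum]; linarith
    have hH0 : 0 ≤ Hfun t := div_nonneg hnum_nonneg (by positivity)
    have hH6 : Hfun t ≤ 6 := by
      rw [Hfun, div_le_iff₀ (by positivity)]
      have hS3 : t^3 ≤ Real.sinh t ^ 3 := by nlinarith
      linarith
    rw [abs_le]; constructor <;> linarith

lemma HB {t : ℝ} (h1 : 1 ≤ t) : |Hfun t - 1| ≤ 162 * Real.exp (-t) := by
  have h0 : (0:ℝ) ≤ t := by linarith
  obtain ⟨a, b, ha, hb⟩ : ∃ a b, Real.exp t = a ∧ Real.exp (-t) = b := ⟨_, _, rfl, rfl⟩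
  have hab : a * b = 1 := by rw [← ha, ← hb, ← Real.exp_add]; simp
  have hapos : 0 < a := ha ▸ Real.exp_pos t
  have hbpos : 0 < b := hb ▸ Real.exp_pos (-t)
  have hta : t ≤ a := by rw [← ha]; linarith [Real.add_one_le_exp t]
  have h1a : 1 ≤ a := by
    rw [← ha]; exact Real.one_le_exp (by linarith : (0:ℝ) ≤ t)
  have hba : 3 * b ≤ a := by
    have h2 : Real.exp (2*t) ≥ 3 := by
      have := Real.add_one_le_exp (2*t); linarith
    have h3 : a = Real.exp (2*t) * b := by rw [← ha, ← hb, ← Real.exp_add]; ring_nf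
    rw [h3]
    nlinarith
  have ht2 : t^2 ≤ 4 * a := by
    have h := Real.add_one_le_exp (t/2)
    have h2 : Real.exp (t/2) * Real.exp (t/2) = a := by rw [← Real.exp_add, ← ha]; ring_nf
    nlinarith
  have hS : Real.sinh t = (a - b)/2 := by rw [Real.sinh_eq, ha, hb]
  have hC : Real.cosh t = (a + b)/2 := by rw [Real.cosh_eq, ha, hb]
  have hSpos : 0 < Real.sinh t := Real.sinh_pos_iff.2 (by linarith)
  have hSge : a/3 ≤ Real.sinh t := by rw [hS]; linarith
  have hSle : Real.sinh t ≤ a/2 := by rw [hS]; linarith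
  have hCle : Real.cosh t ≤ a := by rw [hC]; nlinarith
  have hCS : Real.cosh t - Real.sinh t = b := by rw [hS, hC]; ring
  -- Hfun t - 1 = num / sinh^3
  have hdiff : Hfun t - 1 = ((Real.sinh t ^ 2 + t ^ 2) * Real.cosh t - 2 * t * Real.sinh t
      - Real.sinh t ^ 3) / Real.sinh t ^ 3 := by
    rw [Hfun]; field_simp
  have hnum_id : (Real.sinh t ^ 2 + t ^ 2) * Real.cosh t - 2 * t * Real.sinh t - Real.sinh t ^ 3
      = Real.sinh t ^ 2 * (Real.cosh t - Real.sinh t) + t^2 * Real.cosh t - 2 * t * Real.sinh t := by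
    ring
  have hnum_abs : |(Real.sinh t ^ 2 + t ^ 2) * Real.cosh t - 2 * t * Real.sinh t
      - Real.sinh t ^ 3| ≤ 6 * a^2 := by
    rw [hnum_id, hCS]
    rw [abs_le]
    constructor
    · -- lower bound: each term ≥ -2tS ≥ -2·a·(a/2) ≥ -6a²
      have hterm : 2 * t * Real.sinh t ≤ 2 * a * (a/2) := by
        apply mul_le_mul (by nlinarith) hSle (le_of_lt hSpos) (by positivity)
      have : 0 ≤ Real.sinh t ^2 * b := by positivity
      have : 0 ≤ t^2 * Real.cosh t := by positivity
      nlinarith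
    · have hterm1 : Real.sinh t ^ 2 * b ≤ (a/2)^2 * b := by
        apply mul_le_mul_of_nonneg_right _ (le_of_lt hbpos)
        nlinarith
      have hterm1' : (a/2)^2 * b = a/4 := by nlinarith
      have hterm2 : t^2 * Real.cosh t ≤ (4*a) * a :=
        mul_le_mul ht2 hCle (by positivity) (by positivity)
      have : 0 ≤ 2 * t * Real.sinh t := by positivity
      nlinarith
  rw [hdiff, abs_div, abs_of_pos (by positivity : (0:ℝ) < Real.sinh t ^ 3)]
  have hS3 : a^3/27 ≤ Real.sinh t ^ 3 := by
    have := pow_le_pow_left₀ (by positivity : (0:ℝ) ≤ a/3) hSge 3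
    calc a^3/27 = (a/3)^3 := by ring
    _ ≤ _ := this
  have key : |(Real.sinh t ^ 2 + t ^ 2) * Real.cosh t - 2 * t * Real.sinh t - Real.sinh t ^ 3|
      / Real.sinh t ^ 3 ≤ (6 * a^2) / (a^3/27) := by
    apply div_le_div₀ (by positivity) hnum_abs (by positivity) hS3
  have hfin : (6 * a^2) / (a^3/27) ≤ 162 * b := by
    rw [div_le_iff₀ (by positivity)]
    calc 6*a^2 = 6*a^2*(a*b) := by rw [hab, mul_one]
    _ ≤ 162 * b * (a^3/27) := le_of_eq (by ring)
  rw [hb]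
  exact le_trans key hfin

lemma Hglob {t : ℝ} (h0 : 0 ≤ t) : |Hfun t - 1| ≤ 196 := by
  rcases le_or_gt t 1 with h | h
  · linarith [HA h0 h]
  · have h2 := HB (le_of_lt h)
    have h3 : Real.exp (-t) ≤ 1 := Real.exp_le_one_iff.2 (by linarith)
    nlinarith [h2, h3]

lemma Hfun_measurable : Measurable Hfun := by
  unfold Hfun
  fun_prop

lemma hfun_aux_meas (s : ℝ) :
    Measurable (fun r : ℝ => (Hfun (r ^ 2 / 2) - 1) * r ^ (1 - s)) := by
  apply Measurable.mul
  · exact (Hfun_measurable.comp (by fun_prop)).sub measurable_const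
  · fun_prop

lemma h_intable (s : ℝ) (hs2 : s < 2) {a b : ℝ} (h0 : 0 ≤ a) (hab : a ≤ b) :
    IntervalIntegrable (fun r : ℝ => (Hfun (r ^ 2 / 2) - 1) * r ^ (1 - s))
      MeasureTheory.volume a b := by
  have hs1 : (-1:ℝ) < 1 - s := by linarith
  have hrp : IntervalIntegrable (fun r : ℝ => 196 * r ^ (1 - s)) MeasureTheory.volume a b :=
    (intervalIntegrable_rpow' hs1).const_mul 196
  apply IntervalIntegrable.mono_fun' hrp ((hfun_aux_meas s).aestronglyMeasurable)
  rw [Filter.EventuallyLE, MeasureTheory.ae_restrict_iff' measurableSet_uIoc]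
  apply MeasureTheory.ae_of_all
  intro x hx
  rw [Set.uIoc_of_le hab] at hx
  have hx0 : 0 ≤ x := le_trans h0 (le_of_lt hx.1)
  rw [Real.norm_eq_abs, abs_mul, abs_of_nonneg (Real.rpow_nonneg hx0 _)]
  exact mul_le_mul_of_nonneg_right (Hglob (by positivity)) (Real.rpow_nonneg hx0 _)

-- pointwise tail bound
lemma tail_ptwise (s : ℝ) (hs0 : 0 ≤ s) {x : ℝ} (hx : Real.sqrt 2 ≤ x) :
    |(Hfun (x ^ 2 / 2) - 1) * x ^ (1 - s)| ≤ 648 * Real.exp (-x/2) := by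
  have h1x : (1:ℝ) ≤ x := le_trans (by
    rw [show (1:ℝ) = Real.sqrt 1 by simp]; exact Real.sqrt_le_sqrt (by norm_num)) hx
  have hx0 : (0:ℝ) ≤ x := by linarith
  have hxsq : (2:ℝ) ≤ x ^ 2 := by
    have := Real.sq_sqrt (by norm_num : (0:ℝ) ≤ 2)
    nlinarith [hx, Real.sqrt_nonneg 2]
  have ht1 : (1:ℝ) ≤ x ^ 2 / 2 := by linarith
  have hH := HB ht1
  -- x ^ (1-s) ≤ x
  have hxp : x ^ (1 - s) ≤ x := by
    have := Real.rpow_le_rpow_of_exponent_le h1x (by linarith : 1 - s ≤ 1)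
    rwa [Real.rpow_one] at this
  have hxp0 : 0 ≤ x ^ (1 - s) := Real.rpow_nonneg hx0 _
  -- exp (-(x^2/2)) ≤ 2 * exp (-x)
  have hexp1 : Real.exp (-(x^2/2)) ≤ 2 * Real.exp (-x) := by
    have e1 : Real.exp (-(x^2/2)) ≤ Real.exp (1/2 - x) := by
      apply Real.exp_le_exp.2; nlinarith [sq_nonneg (x - 1)]
    have e2 : Real.exp (1/2 - x) = Real.exp (1/2) * Real.exp (-x) := by
      rw [← Real.exp_add]; ring_nf
    have e3 : Real.exp (1/2) ≤ 2 := by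
      have h4 : Real.exp (1/2) * Real.exp (1/2) = Real.exp 1 := by
        rw [← Real.exp_add]; norm_num
      nlinarith [Real.exp_one_lt_d9, Real.exp_pos (1/2)]
    calc Real.exp (-(x^2/2)) ≤ Real.exp (1/2) * Real.exp (-x) := e2 ▸ e1
    _ ≤ 2 * Real.exp (-x) := by
        exact mul_le_mul_of_nonneg_right e3 (le_of_lt (Real.exp_pos _))
  -- x * exp (-x) ≤ 2 * exp (-x/2)
  have hexp2 : x * Real.exp (-x) ≤ 2 * Real.exp (-x/2) := by
    have e1 : x ≤ 2 * Real.exp (x/2) := by linarith [Real.add_one_le_exp (x/2)]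
    have e2 : Real.exp (x/2) * Real.exp (-x) = Real.exp (-x/2) := by
      rw [← Real.exp_add]; ring_nf
    calc x * Real.exp (-x) ≤ 2 * Real.exp (x/2) * Real.exp (-x) :=
          mul_le_mul_of_nonneg_right e1 (le_of_lt (Real.exp_pos _))
    _ = 2 * Real.exp (-x/2) := by rw [mul_assoc, e2]
  calc |(Hfun (x ^ 2 / 2) - 1) * x ^ (1 - s)| = |Hfun (x ^ 2 / 2) - 1| * x ^ (1 - s) := by
        rw [abs_mul, abs_of_nonneg hxp0]
  _ ≤ (162 * Real.exp (-(x^2/2))) * x := by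
      apply mul_le_mul hH hxp hxp0 (by positivity)
  _ ≤ (162 * (2 * Real.exp (-x))) * x := by
      apply mul_le_mul_of_nonneg_right _ hx0
      exact mul_le_mul_of_nonneg_left hexp1 (by norm_num)
  _ = 324 * (x * Real.exp (-x)) := by ring
  _ ≤ 324 * (2 * Real.exp (-x/2)) := by
      exact mul_le_mul_of_nonneg_left hexp2 (by norm_num)
  _ = 648 * Real.exp (-x/2) := by ring

-- integral of the exponential bound
lemma exp_integral_bound (c T : ℝ) (hc : 0 ≤ c) (hcT : c ≤ T) :
    (∫ r in c..T, 648 * Real.exp (-r/2)) ≤ 1296 := by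
  have hderiv : ∀ x ∈ Set.uIcc c T,
      HasDerivAt (fun y : ℝ => -1296 * Real.exp (-y/2)) (648 * Real.exp (-x/2)) x := by
    intro x _
    have h1 : HasDerivAt (fun y : ℝ => -y/2) (-1/2) x := by
      simpa using ((hasDerivAt_id x).neg.div_const 2)
    have h2 := (Real.hasDerivAt_exp (-x/2)).comp x h1
    have h3 := h2.const_mul (-1296 : ℝ)
    exact h3.congr_deriv (by ring)
  have hcont : IntervalIntegrable (fun x : ℝ => 648 * Real.exp (-x/2)) volume c T := by
    apply Continuous.intervalIntegrable; fun_prop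
  rw [intervalIntegral.integral_eq_sub_of_hasDerivAt hderiv hcont]
  have h1 : Real.exp (-c/2) ≤ 1 := Real.exp_le_one_iff.2 (by linarith)
  have h2 : 0 < Real.exp (-T/2) := Real.exp_pos _
  nlinarith

lemma key_bound (s : ℝ) (hs0 : 0 ≤ s) (hs2 : s < 2) :
    ∀ T : ℝ, Real.sqrt 2 ≤ T →
      |(∫ r in (0:ℝ)..T, Hfun (r ^ 2 / 2) * r ^ (1 - s)) - T ^ (2 - s) / (2 - s)|
        ≤ 392/(2-s) + 1296 := by
  intro T hT
  set c := Real.sqrt 2 with hc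
  have hc0 : 0 ≤ c := Real.sqrt_nonneg 2
  have hc1 : (1:ℝ) ≤ c := by
    rw [hc, show (1:ℝ) = Real.sqrt 1 by simp]; exact Real.sqrt_le_sqrt (by norm_num)
  have hT0 : 0 ≤ T := le_trans hc0 hT
  have hs1 : (-1:ℝ) < 1 - s := by linarith
  have h2s : (0:ℝ) < 2 - s := by linarith
  -- evaluate the rpow integral
  have hpow_eval : ∀ b : ℝ, 0 ≤ b → (∫ r in (0:ℝ)..b, r ^ (1 - s)) = b ^ (2 - s) / (2 - s) := by
    intro b hb
    rw [integral_rpow (Or.inl hs1), Real.zero_rpow (by linarith : (1:ℝ) - s + 1 ≠ 0),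
      show (1:ℝ) - s + 1 = 2 - s by ring]
    ring
  -- split the integrand
  have hint_h0T := h_intable s hs2 (le_refl (0:ℝ)) hT0
  have hint_rpow : ∀ a b : ℝ, IntervalIntegrable (fun r : ℝ => r ^ (1 - s)) volume a b :=
    fun a b => intervalIntegrable_rpow' hs1
  have hsplit : (∫ r in (0:ℝ)..T, Hfun (r ^ 2 / 2) * r ^ (1 - s))
      = (∫ r in (0:ℝ)..T, r ^ (1 - s))
        + ∫ r in (0:ℝ)..T, (Hfun (r ^ 2 / 2) - 1) * r ^ (1 - s) := by
    rw [← intervalIntegral.integral_add (hint_rpow 0 T) hint_h0T]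
    apply intervalIntegral.integral_congr
    intro r _
    ring
  rw [hsplit, hpow_eval T hT0, add_sub_cancel_left]
  -- split the error integral at c
  have hint_h0c := h_intable s hs2 (le_refl (0:ℝ)) hc0
  have hint_hcT := h_intable s hs2 hc0 hT
  have hadj : (∫ r in (0:ℝ)..T, (Hfun (r ^ 2 / 2) - 1) * r ^ (1 - s))
      = (∫ r in (0:ℝ)..c, (Hfun (r ^ 2 / 2) - 1) * r ^ (1 - s))
        + ∫ r in c..T, (Hfun (r ^ 2 / 2) - 1) * r ^ (1 - s) :=
    (intervalIntegral.integral_add_adjacent_intervals hint_h0c hint_hcT).symm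
  rw [hadj]
  -- piece 1
  have hpiece1 : |∫ r in (0:ℝ)..c, (Hfun (r ^ 2 / 2) - 1) * r ^ (1 - s)| ≤ 392/(2-s) := by
    have habs := intervalIntegral.abs_integral_le_integral_abs hc0
      (f := fun r : ℝ => (Hfun (r ^ 2 / 2) - 1) * r ^ (1 - s)) (μ := volume)
    have hmono : (∫ r in (0:ℝ)..c, |(Hfun (r ^ 2 / 2) - 1) * r ^ (1 - s)|)
        ≤ ∫ r in (0:ℝ)..c, 196 * r ^ (1 - s) := by
      apply intervalIntegral.integral_mono_on hc0 hint_h0c.abs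
        ((hint_rpow 0 c).const_mul 196)
      intro x hx
      have hx0 : 0 ≤ x := hx.1
      rw [abs_mul, abs_of_nonneg (Real.rpow_nonneg hx0 _)]
      exact mul_le_mul_of_nonneg_right (Hglob (by positivity)) (Real.rpow_nonneg hx0 _)
    have heval : (∫ r in (0:ℝ)..c, 196 * r ^ (1 - s)) = 196 * (c ^ (2-s) / (2 - s)) := by
      rw [intervalIntegral.integral_const_mul, hpow_eval c hc0]
    have hcle : c ^ (2 - s) ≤ 2 := by
      have h1 : c ^ (2 - s) ≤ c ^ (2:ℝ) := Real.rpow_le_rpow_of_exponent_le hc1 (by linarith)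
      have h2 : c ^ (2:ℝ) = 2 := by
        rw [show (2:ℝ) = ((2:ℕ):ℝ) by norm_num, Real.rpow_natCast, hc,
          Real.sq_sqrt (by norm_num : (0:ℝ) ≤ 2)]
        norm_num
      linarith
    have : 196 * (c ^ (2-s) / (2 - s)) ≤ 392/(2-s) := by
      rw [show 196 * (c ^ (2-s) / (2 - s)) = (196 * c ^ (2-s))/(2-s) by ring]
      gcongr
      linarith
    linarith [habs, hmono, heval ▸ hmono]
  -- piece 2
  have hpiece2 : |∫ r in c..T, (Hfun (r ^ 2 / 2) - 1) * r ^ (1 - s)| ≤ 1296 := by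
    have habs := intervalIntegral.abs_integral_le_integral_abs hT
      (f := fun r : ℝ => (Hfun (r ^ 2 / 2) - 1) * r ^ (1 - s)) (μ := volume)
    have hmono : (∫ r in c..T, |(Hfun (r ^ 2 / 2) - 1) * r ^ (1 - s)|)
        ≤ ∫ r in c..T, 648 * Real.exp (-r/2) := by
      apply intervalIntegral.integral_mono_on hT hint_hcT.abs
        (by apply Continuous.intervalIntegrable; fun_prop)
      intro x hx
      exact tail_ptwise s hs0 hx.1
    linarith [exp_integral_bound c T hc0 hT, habs, hmono]
  calc |(∫ r in (0:ℝ)..c, (Hfun (r ^ 2 / 2) - 1) * r ^ (1 - s))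
        + ∫ r in c..T, (Hfun (r ^ 2 / 2) - 1) * r ^ (1 - s)|
      ≤ |∫ r in (0:ℝ)..c, (Hfun (r ^ 2 / 2) - 1) * r ^ (1 - s)|
        + |∫ r in c..T, (Hfun (r ^ 2 / 2) - 1) * r ^ (1 - s)| := abs_add_le _ _
  _ ≤ 392/(2-s) + 1296 := add_le_add hpiece1 hpiece2

/-- For 0 ≤ s < 2, N^{1+s/2}∫₀^{√log N} H(r²/2) r^{1−s} dr
  = (1/(2−s)) N^{1+s/2}(log N)^{1−s/2}(1 + o(1)) + O(N^{1+s/2}). -/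
theorem near_diagonal_s_energy (s : ℝ) (hs0 : 0 ≤ s) (hs2 : s < 2) :
    ∃ e E : ℝ → ℝ,
      Tendsto e atTop (nhds 0) ∧
      E =O[atTop] (fun N : ℝ => N ^ (1 + s / 2)) ∧
      ∀ᶠ N : ℝ in atTop,
        N ^ (1 + s / 2) * (∫ r in (0:ℝ)..Real.sqrt (Real.log N), Hfun (r ^ 2 / 2) * r ^ (1 - s))
          = (1 / (2 - s)) * N ^ (1 + s / 2) * (Real.log N) ^ (1 - s / 2) * (1 + e N) + E N := by
  refine ⟨fun _ => 0,
    fun N => N ^ (1 + s / 2) *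
        (∫ r in (0:ℝ)..Real.sqrt (Real.log N), Hfun (r ^ 2 / 2) * r ^ (1 - s))
      - (1 / (2 - s)) * N ^ (1 + s / 2) * (Real.log N) ^ (1 - s / 2),
    tendsto_const_nhds, ?_, ?_⟩
  · rw [isBigO_iff]
    refine ⟨392/(2-s) + 1296, ?_⟩
    filter_upwards [Filter.eventually_ge_atTop (Real.exp 2),
      Filter.eventually_ge_atTop (0:ℝ)] with N hN hN0
    have hlog : 2 ≤ Real.log N := by
      rw [show (2:ℝ) = Real.log (Real.exp 2) by rw [Real.log_exp]]
      exact Real.log_le_log (Real.exp_pos 2) hN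
    have hlog0 : 0 ≤ Real.log N := by linarith
    have hT : Real.sqrt 2 ≤ Real.sqrt (Real.log N) := Real.sqrt_le_sqrt hlog
    have hkey := key_bound s hs0 hs2 _ hT
    have hTpow : Real.sqrt (Real.log N) ^ (2 - s) = (Real.log N) ^ (1 - s/2) := by
      rw [Real.sqrt_eq_rpow, ← Real.rpow_mul hlog0,
        show (1/2) * (2 - s) = 1 - s/2 by ring]
    have hE : N ^ (1 + s / 2) *
        (∫ r in (0:ℝ)..Real.sqrt (Real.log N), Hfun (r ^ 2 / 2) * r ^ (1 - s))
      - (1 / (2 - s)) * N ^ (1 + s / 2) * (Real.log N) ^ (1 - s / 2)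
      = N ^ (1 + s / 2) *
        ((∫ r in (0:ℝ)..Real.sqrt (Real.log N), Hfun (r ^ 2 / 2) * r ^ (1 - s))
          - Real.sqrt (Real.log N) ^ (2 - s) / (2 - s)) := by
      rw [hTpow]; ring
    rw [Real.norm_eq_abs, Real.norm_eq_abs, hE, abs_mul]
    rw [abs_of_nonneg (Real.rpow_nonneg hN0 _)]
    calc N ^ (1 + s / 2) * |(∫ r in (0:ℝ)..Real.sqrt (Real.log N),
            Hfun (r ^ 2 / 2) * r ^ (1 - s)) - Real.sqrt (Real.log N) ^ (2 - s) / (2 - s)|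
        ≤ N ^ (1 + s / 2) * (392/(2-s) + 1296) :=
          mul_le_mul_of_nonneg_left hkey (Real.rpow_nonneg hN0 _)
    _ = (392/(2-s) + 1296) * N ^ (1 + s / 2) := by ring
  · apply Filter.Eventually.of_forall
    intro N
    ring
end

section
/- The function H(t) = ((sinh²t + t²)cosh t − 2t sinh t)/sinh³t extends continuously to t = 0 with H(0) = 0, and H(t) > 0 for all t > 0. -/
open Real Filter

lemma sinh_le_mul_cosh {t : ℝ} (ht : 0 < t) : Real.sinh t ≤ t * Real.cosh t := by
  have h : StrictMonoOn (fun x : ℝ => x * Real.cosh x - Real.sinh x) (Set.Ici 0) := by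
    apply strictMonoOn_of_deriv_pos (convex_Ici 0)
    · fun_prop
    · intro x hx
      rw [interior_Ici, Set.mem_Ioi] at hx
      have : HasDerivAt (fun x : ℝ => x * Real.cosh x - Real.sinh x)
          (1 * Real.cosh x + x * Real.sinh x - Real.cosh x) x := by
        exact ((hasDerivAt_id x).mul (Real.hasDerivAt_cosh x)).sub (Real.hasDerivAt_sinh x)
      rw [this.deriv]
      have := Real.sinh_pos_iff.mpr hx
      nlinarith
  have := h (Set.self_mem_Ici) (Set.mem_Ici.mpr ht.le) ht
  simp at this
  linarith

lemma Hfun_key (t : ℝ) :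
    (Real.sinh t ^ 2 + t ^ 2) * Real.cosh t - 2 * t * Real.sinh t
      = Real.cosh t * (Real.sinh t - t) ^ 2 + 2 * t * Real.sinh t * (Real.cosh t - 1) := by
  ring

lemma Hfun_pos {t : ℝ} (ht : 0 < t) : 0 < Hfun t := by
  have hs : 0 < Real.sinh t := Real.sinh_pos_iff.mpr ht
  have hc : 1 < Real.cosh t := Real.one_lt_cosh.mpr ht.ne'
  apply div_pos
  · rw [Hfun_key]
    have h1 : 0 ≤ Real.cosh t * (Real.sinh t - t) ^ 2 := by positivity
    have h2 : 0 < 2 * t * Real.sinh t * (Real.cosh t - 1) :=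
      mul_pos (mul_pos (by linarith) hs) (by linarith)
    linarith
  · positivity

/-- H extends continuously to 0 with H(0) = 0, and H(t) > 0 for all t > 0. -/
theorem Hfun_continuous_at_zero_and_pos :
    Tendsto Hfun (nhdsWithin 0 (Set.Ioi 0)) (nhds 0) ∧ ∀ t : ℝ, 0 < t → 0 < Hfun t := by
  refine ⟨?_, fun t ht => Hfun_pos ht⟩
  -- slope of cosh at 0 tends to sinh 0 = 0
  have hslope : Tendsto (fun t : ℝ => (Real.cosh t - 1) / t) (nhdsWithin 0 (Set.Ioi 0)) (nhds 0) := by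
    have h := (Real.hasDerivAt_cosh 0)
    rw [hasDerivAt_iff_tendsto_slope] at h
    have h2 : Tendsto (slope Real.cosh 0) (nhdsWithin 0 (Set.Ioi 0)) (nhds (Real.sinh 0)) :=
      h.mono_left (nhdsWithin_mono 0 (fun x hx => ne_of_gt hx))
    simp only [Real.sinh_zero] at h2
    refine h2.congr (fun x => ?_)
    rw [slope_def_field]
    simp
  have hcosh : Tendsto (fun t : ℝ => Real.cosh t) (nhdsWithin 0 (Set.Ioi 0)) (nhds 1) := by
    have h := Real.continuous_cosh.tendsto 0
    rw [Real.cosh_zero] at h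
    exact h.mono_left nhdsWithin_le_nhds
  have hcosh1 : Tendsto (fun t : ℝ => Real.cosh t - 1) (nhdsWithin 0 (Set.Ioi 0)) (nhds 0) := by
    simpa using hcosh.sub_const 1
  have hg : Tendsto (fun t : ℝ => Real.cosh t * (Real.cosh t - 1) * ((Real.cosh t - 1) / t)
      + 2 * ((Real.cosh t - 1) / t)) (nhdsWithin 0 (Set.Ioi 0)) (nhds 0) := by
    have := ((hcosh.mul hcosh1).mul hslope).add ((tendsto_const_nhds (x := (2:ℝ))).mul hslope)
    simpa using this
  apply tendsto_of_tendsto_of_tendsto_of_le_of_le' (tendsto_const_nhds (x := (0:ℝ))) hg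
  · filter_upwards [self_mem_nhdsWithin] with t ht
    exact (Hfun_pos ht).le
  · filter_upwards [self_mem_nhdsWithin] with t ht
    rw [Set.mem_Ioi] at ht
    have hs : 0 < Real.sinh t := Real.sinh_pos_iff.mpr ht
    have hst : t < Real.sinh t := Real.self_lt_sinh_iff.mpr ht
    have hc1 : 1 ≤ Real.cosh t := Real.one_le_cosh t
    have hkey : Real.sinh t - t ≤ t * (Real.cosh t - 1) := by
      have := sinh_le_mul_cosh ht
      nlinarith
    have hkey0 : 0 ≤ Real.sinh t - t := by linarith
    -- Hfun t = A/sinh^3 + B/sinh^2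
    have hH : Hfun t = Real.cosh t * (Real.sinh t - t) ^ 2 / Real.sinh t ^ 3
        + 2 * t * (Real.cosh t - 1) / Real.sinh t ^ 2 := by
      unfold Hfun
      rw [Hfun_key]
      field_simp
    rw [hH]
    have h1 : Real.cosh t * (Real.sinh t - t) ^ 2 / Real.sinh t ^ 3
        ≤ Real.cosh t * (t * (Real.cosh t - 1)) ^ 2 / t ^ 3 := by
      apply div_le_div₀ (by positivity)
      · have : (Real.sinh t - t) ^ 2 ≤ (t * (Real.cosh t - 1)) ^ 2 :=
          pow_le_pow_left₀ hkey0 hkey 2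
        nlinarith [Real.one_le_cosh t]
      · positivity
      · exact pow_le_pow_left₀ ht.le hst.le 3
    have h2 : 2 * t * (Real.cosh t - 1) / Real.sinh t ^ 2
        ≤ 2 * t * (Real.cosh t - 1) / t ^ 2 := by
      apply div_le_div₀ (by nlinarith) le_rfl (by positivity)
      exact pow_le_pow_left₀ ht.le hst.le 2
    have e1 : Real.cosh t * (t * (Real.cosh t - 1)) ^ 2 / t ^ 3
        = Real.cosh t * (Real.cosh t - 1) * ((Real.cosh t - 1) / t) := by
      field_simp
    have e2 : 2 * t * (Real.cosh t - 1) / t ^ 2 = 2 * ((Real.cosh t - 1) / t) := by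
      field_simp
    rw [e1] at h1
    rw [e2] at h2
    linarith
end
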